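/- Let ν > 0 and k real with k² < 1, set λ = ν/(2(1−k²)), and for ξ > 0 define S(ξ) = √(cosh²ξ − k² sinh²ξ), a(ξ) = λ(S(ξ)+1)/sinh ξ, b(ξ) = λ(S(ξ)−1)/sinh ξ, c(ξ) = −λ k tanh ξ, d(ξ) = λ(√(1 − k² tanh²ξ) − cosh ξ)/sinh ξ, u(ξ) = 2λ coth ξ, and w(ξ, θ) = a(ξ)² − b(ξ)² cos²(2θ). Then for every θ ∈ (0, π/2), as ξ → ∞: u/w → 1/(ν sin²θ cos²θ), cos²θ·(u + 2d cos²θ)/w → 1/ν, sin²θ·(u + 2d sin²θ)/w → 1/ν, and 2c sin²θ cos²θ/w → −k/ν. -/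

import Mathlib

open Filter Real

/-- pointwise limits, as ξ → ∞, of the coefficients of Fateev's ancient
solution, showing convergence to the collapsed metric
`(1/ν)(dθ²/(sin²θcos²θ) + dχ₁² + dχ₂² − 2k dχ₁dχ₂)`. -/
theorem stmt_12 (ν k θ : ℝ) (hν : 0 < ν) (hk : k ^ 2 < 1)
    (hθ : θ ∈ Set.Ioo 0 (Real.pi / 2))
    (lam : ℝ) (hlam : lam = ν / (2 * (1 - k ^ 2)))
    (S a b c d u w : ℝ → ℝ)
    (hS : ∀ ξ, S ξ = Real.sqrt (Real.cosh ξ ^ 2 - k ^ 2 * Real.sinh ξ ^ 2))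
    (ha : ∀ ξ, a ξ = lam * (S ξ + 1) / Real.sinh ξ)
    (hb : ∀ ξ, b ξ = lam * (S ξ - 1) / Real.sinh ξ)
    (hc : ∀ ξ, c ξ = -(lam * k * Real.tanh ξ))
    (hd : ∀ ξ, d ξ = lam * (Real.sqrt (1 - k ^ 2 * Real.tanh ξ ^ 2) - Real.cosh ξ) /
      Real.sinh ξ)
    (hu : ∀ ξ, u ξ = 2 * lam * (Real.cosh ξ / Real.sinh ξ))
    (hw : ∀ ξ, w ξ = (a ξ) ^ 2 - (b ξ) ^ 2 * Real.cos (2 * θ) ^ 2) :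
    Filter.Tendsto (fun ξ => u ξ / w ξ) Filter.atTop
      (nhds (1 / (ν * Real.sin θ ^ 2 * Real.cos θ ^ 2))) ∧
    Filter.Tendsto (fun ξ => Real.cos θ ^ 2 * (u ξ + 2 * d ξ * Real.cos θ ^ 2) / w ξ)
      Filter.atTop (nhds (1 / ν)) ∧
    Filter.Tendsto (fun ξ => Real.sin θ ^ 2 * (u ξ + 2 * d ξ * Real.sin θ ^ 2) / w ξ)
      Filter.atTop (nhds (1 / ν)) ∧
    Filter.Tendsto (fun ξ => 2 * c ξ * Real.sin θ ^ 2 * Real.cos θ ^ 2 / w ξ)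
      Filter.atTop (nhds (-(k / ν))) := by
  obtain ⟨hθ0, hθ1⟩ := hθ
  have hk' : (0:ℝ) < 1 - k ^ 2 := by linarith
  have hlam0 : 0 < lam := by rw [hlam]; positivity
  have hsθ : 0 < Real.sin θ := Real.sin_pos_of_pos_of_lt_pi hθ0
    (by linarith [Real.pi_pos])
  have hcθ : 0 < Real.cos θ := Real.cos_pos_of_mem_Ioo
    ⟨by linarith [Real.pi_pos], hθ1⟩
  -- sinh → ∞
  have hsinh : Tendsto Real.sinh atTop atTop := by
    have h2 : Tendsto (fun x => (Real.exp x + (-1)) / 2) atTop atTop :=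
      (tendsto_atTop_add_const_right _ (-1) Real.tendsto_exp_atTop).atTop_div_const two_pos
    refine tendsto_atTop_mono' _ ?_ h2
    filter_upwards [eventually_ge_atTop 0] with x hx
    have : Real.exp (-x) ≤ 1 := Real.exp_le_one_iff.mpr (by linarith)
    rw [Real.sinh_eq]; linarith
  have hinv : Tendsto (fun ξ => (Real.sinh ξ)⁻¹) atTop (nhds 0) :=
    hsinh.inv_tendsto_atTop
  -- cosh/sinh → 1
  have hcoth : Tendsto (fun ξ => Real.cosh ξ / Real.sinh ξ) atTop (nhds 1) := by
    have h0 : Tendsto (fun ξ => Real.sqrt (1 + ((Real.sinh ξ)⁻¹) ^ 2)) atTop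
        (nhds 1) := by
      have h1 : Tendsto (fun ξ => 1 + ((Real.sinh ξ)⁻¹) ^ 2) atTop
          (nhds (1 + 0 ^ 2)) := tendsto_const_nhds.add (hinv.pow 2)
      have h2 := (Real.continuous_sqrt.tendsto _).comp h1
      simpa [Function.comp_def] using h2
    refine h0.congr' ?_
    filter_upwards [eventually_gt_atTop 0] with ξ hξ
    have hs : 0 < Real.sinh ξ := Real.sinh_pos_iff.mpr hξ
    have hcos : 0 < Real.cosh ξ := Real.cosh_pos ξ
    have key : (1:ℝ) + ((Real.sinh ξ)⁻¹) ^ 2 = (Real.cosh ξ / Real.sinh ξ) ^ 2 := by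
      field_simp
      nlinarith [Real.cosh_sq ξ]
    rw [key, Real.sqrt_sq (by positivity)]
  -- tanh → 1
  have htanh : Tendsto Real.tanh atTop (nhds 1) := by
    have h1 := hcoth.inv₀ one_ne_zero
    simp only [inv_div, inv_one] at h1
    refine h1.congr fun ξ => ?_
    rw [Real.tanh_eq_sinh_div_cosh]
  -- S/sinh → √(1−k²)
  have hSdiv : Tendsto (fun ξ => S ξ / Real.sinh ξ) atTop
      (nhds (Real.sqrt (1 - k ^ 2))) := by
    have h1 : Tendsto (fun ξ => (Real.cosh ξ / Real.sinh ξ) ^ 2 - k ^ 2) atTop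
        (nhds (1 - k ^ 2)) := by
      have := (hcoth.pow 2).sub (tendsto_const_nhds (x := k ^ 2))
      simpa using this
    have h2 := (Real.continuous_sqrt.tendsto _).comp h1
    refine h2.congr' ?_
    filter_upwards [eventually_gt_atTop 0] with ξ hξ
    have hs : 0 < Real.sinh ξ := Real.sinh_pos_iff.mpr hξ
    have hnum : 0 ≤ Real.cosh ξ ^ 2 - k ^ 2 * Real.sinh ξ ^ 2 := by
      nlinarith [Real.cosh_sq ξ, sq_nonneg (Real.sinh ξ)]
    have key : (Real.cosh ξ / Real.sinh ξ) ^ 2 - k ^ 2 =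
        (Real.cosh ξ ^ 2 - k ^ 2 * Real.sinh ξ ^ 2) / Real.sinh ξ ^ 2 := by
      field_simp
    rw [Function.comp_apply, key, Real.sqrt_div hnum, hS, Real.sqrt_sq hs.le]
  -- limits of a, b, u, c, d
  set Q := Real.sqrt (1 - k ^ 2) with hQdef
  have hQpos : 0 < Q := Real.sqrt_pos.mpr hk'
  have hQ : Q ^ 2 = 1 - k ^ 2 := Real.sq_sqrt hk'.le
  have h_a : Tendsto a atTop (nhds (lam * (Q + 0))) := by
    refine Tendsto.congr (fun ξ => ?_) ((hSdiv.add hinv).const_mul lam)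
    rw [ha]; ring
  have h_b : Tendsto b atTop (nhds (lam * (Q - 0))) := by
    refine Tendsto.congr (fun ξ => ?_) ((hSdiv.sub hinv).const_mul lam)
    rw [hb]; ring
  have h_u : Tendsto u atTop (nhds (2 * lam * 1)) := by
    refine Tendsto.congr (fun ξ => ?_) (hcoth.const_mul (2 * lam))
    rw [hu]
  have h_c : Tendsto c atTop (nhds (-(lam * k * 1))) := by
    refine Tendsto.congr (fun ξ => ?_) (htanh.const_mul (lam * k)).neg
    rw [hc]
  have h_d : Tendsto d atTop (nhds (lam * (Q * 0 - 1))) := by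
    have hsq : Tendsto (fun ξ => Real.sqrt (1 - k ^ 2 * Real.tanh ξ ^ 2)) atTop
        (nhds Q) := by
      have h1 : Tendsto (fun ξ => 1 - k ^ 2 * Real.tanh ξ ^ 2) atTop
          (nhds (1 - k ^ 2)) := by
        have := Tendsto.sub (tendsto_const_nhds (x := (1:ℝ))) ((htanh.pow 2).const_mul (k ^ 2))
        simpa using this
      simpa [Function.comp_def] using (Real.continuous_sqrt.tendsto _).comp h1
    refine Tendsto.congr (fun ξ => ?_) (((hsq.mul hinv).sub hcoth).const_mul lam)
    rw [hd]; ring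
  -- limit of w
  have h_w : Tendsto w atTop
      (nhds ((lam * (Q + 0)) ^ 2 - (lam * (Q - 0)) ^ 2 * Real.cos (2 * θ) ^ 2)) := by
    refine Tendsto.congr (fun ξ => ?_) ((h_a.pow 2).sub ((h_b.pow 2).mul_const _))
    rw [hw]
  -- value of the limit of w
  have hνval : ν = 2 * lam * (1 - k ^ 2) := by
    rw [hlam]; field_simp
  have hc2 : Real.cos (2 * θ) = 2 * Real.cos θ ^ 2 - 1 := Real.cos_two_mul θ
  have hs2 : Real.sin θ ^ 2 = 1 - Real.cos θ ^ 2 := by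
    nlinarith [Real.sin_sq_add_cos_sq θ]
  have hWval : (lam * (Q + 0)) ^ 2 - (lam * (Q - 0)) ^ 2 * Real.cos (2 * θ) ^ 2 =
      2 * lam * ν * Real.sin θ ^ 2 * Real.cos θ ^ 2 := by
    rw [hc2, hνval]
    linear_combination (lam ^ 2 * (1 - (2 * Real.cos θ ^ 2 - 1) ^ 2)) * hQ -
      4 * lam ^ 2 * (1 - k ^ 2) * Real.cos θ ^ 2 * hs2
  have hWpos : 0 < (lam * (Q + 0)) ^ 2 - (lam * (Q - 0)) ^ 2 * Real.cos (2 * θ) ^ 2 := by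
    rw [hWval]; positivity
  have hW0 : ((lam * (Q + 0)) ^ 2 - (lam * (Q - 0)) ^ 2 * Real.cos (2 * θ) ^ 2) ≠ 0 :=
    ne_of_gt hWpos
  have hνne : ν ≠ 0 := ne_of_gt hν
  have hlamne : lam ≠ 0 := ne_of_gt hlam0
  have hsne : Real.sin θ ≠ 0 := ne_of_gt hsθ
  have hcne : Real.cos θ ≠ 0 := ne_of_gt hcθ
  refine ⟨?_, ?_, ?_, ?_⟩
  · have h1 := h_u.div h_w hW0
    have e1 : (1 : ℝ) / (ν * Real.sin θ ^ 2 * Real.cos θ ^ 2) =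
        2 * lam * 1 / ((lam * (Q + 0)) ^ 2 - (lam * (Q - 0)) ^ 2 * Real.cos (2 * θ) ^ 2) := by
      rw [hWval]; field_simp
    rw [e1]; exact h1
  · have hnum : Tendsto (fun ξ => Real.cos θ ^ 2 * (u ξ + 2 * d ξ * Real.cos θ ^ 2))
        atTop (nhds (Real.cos θ ^ 2 * (2 * lam * 1 + 2 * (lam * (Q * 0 - 1)) * Real.cos θ ^ 2))) :=
      (h_u.add ((h_d.const_mul 2).mul_const _)).const_mul _
    have h1 := hnum.div h_w hW0
    have e0 : Real.cos θ ^ 2 * (2 * lam * 1 + 2 * (lam * (Q * 0 - 1)) * Real.cos θ ^ 2) =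
        2 * lam * (Real.sin θ ^ 2 * Real.cos θ ^ 2) := by
      rw [hs2]; ring
    have e1 : (1 : ℝ) / ν =
        Real.cos θ ^ 2 * (2 * lam * 1 + 2 * (lam * (Q * 0 - 1)) * Real.cos θ ^ 2) /
        ((lam * (Q + 0)) ^ 2 - (lam * (Q - 0)) ^ 2 * Real.cos (2 * θ) ^ 2) := by
      rw [hWval, e0]; field_simp
    rw [e1]; exact h1
  · have hnum : Tendsto (fun ξ => Real.sin θ ^ 2 * (u ξ + 2 * d ξ * Real.sin θ ^ 2))
        atTop (nhds (Real.sin θ ^ 2 * (2 * lam * 1 + 2 * (lam * (Q * 0 - 1)) * Real.sin θ ^ 2))) :=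
      (h_u.add ((h_d.const_mul 2).mul_const _)).const_mul _
    have h1 := hnum.div h_w hW0
    have e0 : Real.sin θ ^ 2 * (2 * lam * 1 + 2 * (lam * (Q * 0 - 1)) * Real.sin θ ^ 2) =
        2 * lam * (Real.sin θ ^ 2 * Real.cos θ ^ 2) := by
      rw [hs2]; ring
    have e1 : (1 : ℝ) / ν =
        Real.sin θ ^ 2 * (2 * lam * 1 + 2 * (lam * (Q * 0 - 1)) * Real.sin θ ^ 2) /
        ((lam * (Q + 0)) ^ 2 - (lam * (Q - 0)) ^ 2 * Real.cos (2 * θ) ^ 2) := by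
      rw [hWval, e0]; field_simp
    rw [e1]; exact h1
  · have hnum : Tendsto (fun ξ => 2 * c ξ * Real.sin θ ^ 2 * Real.cos θ ^ 2) atTop
        (nhds (2 * -(lam * k * 1) * Real.sin θ ^ 2 * Real.cos θ ^ 2)) :=
      ((h_c.const_mul 2).mul_const _).mul_const _
    have h1 := hnum.div h_w hW0
    have e1 : -(k / ν) =
        2 * -(lam * k * 1) * Real.sin θ ^ 2 * Real.cos θ ^ 2 /
        ((lam * (Q + 0)) ^ 2 - (lam * (Q - 0)) ^ 2 * Real.cos (2 * θ) ^ 2) := by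
      rw [hWval]; field_simp
    rw [e1]; exact h1
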